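/- Let D̄ = {z ∈ ℂ : ‖z‖ ≤ 1} and Circle = {z ∈ ℂ : ‖z‖ = 1}, and let φ : D̄ × Circle → ℂ be continuous and odd in the fiber variable: φ(p, −w) = −φ(p, w) for all p ∈ D̄, w ∈ Circle. Suppose the boundary loop β : t ↦ φ(exp(2πit), −exp(2πit)) never takes the value 0 and is null-homotopic in ℂ \ {0}. Then φ vanishes at some point: there exist p ∈ D̄ and w ∈ Circle with φ(p, w) = 0. -/

import Mathlib

open Real Complex
open Set

lemma mem_slitPlane_of_norm_lt {z : ℂ} (h : ‖z - 1‖ < 1) : z ∈ Complex.slitPlane := by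
  refine Complex.mem_slitPlane_iff.2 (Or.inl ?_)
  have h2 : |(z - 1).re| ≤ ‖z - 1‖ := by
    exact Complex.abs_re_le_norm _
  have : |z.re - 1| < 1 := by simpa [Complex.sub_re] using lt_of_le_of_lt h2 h
  have := abs_lt.1 this
  linarith

lemma norm_div_sub_one_lt {z w : ℂ} (hw : w ≠ 0) (h : dist z w < ‖w‖) : ‖z / w - 1‖ < 1 := by
  have : z / w - 1 = (z - w) / w := by field_simp
  rw [this, norm_div]
  rw [dist_eq_norm] at h
  exact (div_lt_one (norm_pos_iff.2 hw)).2 h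

lemma continuousOn_log_comp {f : ℝ → ℂ} {s : Set ℝ} (hf : ContinuousOn f s)
    (hr : ∀ t ∈ s, ‖f t - 1‖ < 1) :
    ContinuousOn (fun t => Complex.log (f t)) s :=
  hf.clog fun t ht => mem_slitPlane_of_norm_lt (hr t ht)

lemma prod_div_telescope {N : ℕ} (f : ℕ → ℂ) (hf : ∀ i, f i ≠ 0) :
    (∏ i ∈ Finset.range N, f (i + 1) / f i) = f N / f 0 := by
  induction N with
  | zero => simp [(hf 0)]
  | succ n ih =>
    rw [Finset.prod_range_succ, ih, div_mul_div_comm]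
    rw [mul_comm (f n)]
    rw [mul_comm (f 0) (f n), ← div_div, mul_div_assoc, div_self (hf n), mul_one]

lemma int_eq_of_preconnected {g : ℝ → ℝ} {s : Set ℝ} (hs : IsPreconnected s)
    (hg : ContinuousOn g s) (h : ∀ t ∈ s, ∃ k : ℤ, g t = k)
    {a b : ℝ} (ha : a ∈ s) (hb : b ∈ s) : g a = g b := by
  have hS : IsPreconnected (g '' s) := hs.image g hg
  have hoc : OrdConnected (g '' s) := hS.ordConnected
  have key : ∀ u v : ℝ, u ∈ g '' s → v ∈ g '' s → u < v → False := by
    intro u v hu hv huv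
    obtain ⟨tu, htu, rfl⟩ := hu
    obtain ⟨tv, htv, rfl⟩ := hv
    obtain ⟨ku, hku⟩ := h tu htu
    obtain ⟨kv, hkv⟩ := h tv htv
    have hc : g tu + 1/2 ∈ g '' s := by
      apply hoc.out (mem_image_of_mem g htu) (mem_image_of_mem g htv)
      constructor
      · linarith
      · have : (ku : ℝ) < kv := by rw [← hku, ← hkv]; exact huv
        have : ku < kv := by exact_mod_cast this
        have : (ku : ℝ) + 1 ≤ kv := by exact_mod_cast this
        rw [hku, hkv]; linarith
    obtain ⟨tc, htc, hc2⟩ := hc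
    obtain ⟨kc, hkc⟩ := h tc htc
    rw [hkc, hku] at hc2
    have : ((2*kc : ℤ) : ℝ) = ((2*ku + 1 : ℤ) : ℝ) := by push_cast; linarith
    have := Int.cast_injective this
    omega
  rcases lt_trichotomy (g a) (g b) with hlt | heq | hgt
  · exact absurd (key _ _ (mem_image_of_mem g ha) (mem_image_of_mem g hb) hlt) id
  · exact heq
  · exact absurd (key _ _ (mem_image_of_mem g hb) (mem_image_of_mem g ha) hgt) id

lemma eq_of_exp_eq_one {f : ℝ → ℂ} {s : Set ℝ}
    (hs : IsPreconnected s) (hf : ContinuousOn f s)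
    (h : ∀ t ∈ s, Complex.exp (f t) = 1) {a b : ℝ} (ha : a ∈ s) (hb : b ∈ s) :
    f a = f b := by
  have hint : ∀ t ∈ s, ∃ k : ℤ, f t = k * (2 * π * Complex.I) := by
    intro t ht; exact Complex.exp_eq_one_iff.1 (h t ht)
  have him : ∀ t ∈ s, ∃ k : ℤ, (f t).im / (2 * π) = k := by
    intro t ht
    obtain ⟨k, hk⟩ := hint t ht
    refine ⟨k, ?_⟩
    rw [hk]
    have : ((k : ℂ) * (2 * π * Complex.I)).im = k * (2 * π) := by simp
    rw [this]
    field_simp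
  have hgc : ContinuousOn (fun t => (f t).im / (2 * π)) s :=
    (Complex.continuous_im.comp_continuousOn hf).div_const _
  have := int_eq_of_preconnected hs hgc him ha hb
  obtain ⟨ka, hka⟩ := hint a ha
  obtain ⟨kb, hkb⟩ := hint b hb
  have hpi : (2 * π : ℝ) ≠ 0 := by positivity
  have hima : (f a).im / (2*π) = ka := by rw [hka]; simp
  have himb : (f b).im / (2*π) = kb := by rw [hkb]; simp
  have : (ka : ℝ) = kb := by rw [← hima, ← himb]; exact this
  have : ka = kb := by exact_mod_cast this
  rw [hka, hkb, this]
lemma exists_lift {γ : ℝ → ℂ} (hc : ContinuousOn γ (Icc 0 1))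
    (h0 : ∀ t ∈ Icc (0:ℝ) 1, γ t ≠ 0) :
    ∃ L : ℝ → ℂ, ContinuousOn L (Icc 0 1) ∧ ∀ t ∈ Icc (0:ℝ) 1, Complex.exp (L t) = γ t := by
  -- minimum of the norm
  obtain ⟨a, haI, hmin⟩ := isCompact_Icc.exists_isMinOn (nonempty_Icc.2 zero_le_one)
    (continuous_norm.comp_continuousOn hc)
  set m : ℝ := ‖γ a‖ with hm_def
  have hm : 0 < m := norm_pos_iff.2 (h0 a haI)
  have hmin' : ∀ t ∈ Icc (0:ℝ) 1, m ≤ ‖γ t‖ := fun t ht => hmin ht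
  -- uniform continuity
  have hu := isCompact_Icc.uniformContinuousOn_of_continuous hc
  rw [Metric.uniformContinuousOn_iff] at hu
  obtain ⟨δ, hδ, hud⟩ := hu m hm
  obtain ⟨n, hn⟩ := exists_nat_one_div_lt hδ
  set N : ℕ := n + 1 with hN_def
  have hNpos : (0:ℝ) < N := by positivity
  have hNδ : 1 / (N:ℝ) < δ := by exact_mod_cast hn
  set u : ℕ → ℝ → ℝ := fun i t => min t ((i : ℝ) / N) with hu_def
  have hmem : ∀ (i : ℕ) (t : ℝ), t ∈ Icc (0:ℝ) 1 → u i t ∈ Icc (0:ℝ) 1 := by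
    intro i t ht
    constructor
    · exact le_min ht.1 (by positivity)
    · exact min_le_of_left_le ht.2
  have hconsec : ∀ (i : ℕ) (t : ℝ), u i t ≤ u (i+1) t ∧ u (i+1) t ≤ u i t + 1/N := by
    intro i t
    have hcast : ((i+1 : ℕ):ℝ) = (i:ℝ)+1 := by push_cast; ring
    have hdivle : (i : ℝ)/N ≤ ((i:ℝ)+1)/N := by gcongr; linarith
    constructor
    · apply min_le_min le_rfl
      rw [hcast]
      exact hdivle
    · rcases le_or_gt t ((i:ℝ)/N) with h | h
      · have h1 : u (i+1) t = t := by
          apply min_eq_left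
          rw [hcast]
          exact le_trans h hdivle
        have h2 : u i t = t := min_eq_left h
        rw [h1, h2]
        have : 0 < 1/(N:ℝ) := by positivity
        linarith
      · have h2 : u i t = (i:ℝ)/N := min_eq_right h.le
        have h3 : u (i+1) t ≤ ((i:ℝ)+1)/N := by
          calc u (i+1) t ≤ (((i+1) : ℕ):ℝ)/N := min_le_right _ _
            _ = ((i:ℝ)+1)/N := by rw [hcast]
        rw [h2]
        rw [add_div] at h3
        linarith
  have hstep : ∀ (i : ℕ) (t : ℝ), dist (u (i+1) t) (u i t) < δ := by
    intro i t
    obtain ⟨h1, h2⟩ := hconsec i t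
    rw [Real.dist_eq, _root_.abs_of_nonneg (by linarith)]
    linarith
  -- the ratios
  have hratio : ∀ (i : ℕ) (t : ℝ), t ∈ Icc (0:ℝ) 1 →
      ‖γ (u (i+1) t) / γ (u i t) - 1‖ < 1 := by
    intro i t ht
    apply norm_div_sub_one_lt (h0 _ (hmem i t ht))
    calc dist (γ (u (i+1) t)) (γ (u i t)) < m :=
          hud _ (hmem (i+1) t ht) _ (hmem i t ht) (hstep i t)
      _ ≤ ‖γ (u i t)‖ := hmin' _ (hmem i t ht)
  -- the lift
  refine ⟨fun t => Complex.log (γ 0) +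
    ∑ i ∈ Finset.range N, Complex.log (γ (u (i+1) t) / γ (u i t)), ?_, ?_⟩
  · apply ContinuousOn.add continuousOn_const
    apply continuousOn_finset_sum
    intro i _
    have hcomp : ∀ j : ℕ, ContinuousOn (fun t => γ (u j t)) (Icc 0 1) := by
      intro j
      apply hc.comp ((continuous_id.min continuous_const).continuousOn)
      intro t ht
      exact hmem j t ht
    apply ContinuousOn.clog (((hcomp (i+1)).div (hcomp i)) (fun t ht => h0 _ (hmem i t ht)))
    intro t ht
    exact mem_slitPlane_of_norm_lt (hratio i t ht)
  · intro t ht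
    have h00 : (0:ℝ) ∈ Icc (0:ℝ) 1 := ⟨le_refl 0, zero_le_one⟩
    rw [Complex.exp_add, Complex.exp_sum, Complex.exp_log (h0 0 h00)]
    have hexplog : ∀ i ∈ Finset.range N,
        Complex.exp (Complex.log (γ (u (i+1) t) / γ (u i t))) = γ (u (i+1) t) / γ (u i t) := by
      intro i _
      exact Complex.exp_log (div_ne_zero (h0 _ (hmem (i+1) t ht)) (h0 _ (hmem i t ht)))
    rw [Finset.prod_congr rfl hexplog]
    rw [prod_div_telescope (fun i => γ (u i t)) (fun i => h0 _ (hmem i t ht))]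
    have huN : u N t = t := by
      apply min_eq_left
      rw [div_self (ne_of_gt hNpos)]
      exact ht.2
    have hu0 : u 0 t = 0 := by
      simp only [hu_def]
      push_cast
      rw [zero_div]
      exact min_eq_right ht.1
    rw [huN, hu0, mul_comm, div_mul_cancel₀ _ (h0 0 h00)]

lemma const_of_locally_const {f : ℝ → ℂ} {s : Set ℝ} (hs : IsPreconnected s) {δ : ℝ} (hδ : 0 < δ)
    (h : ∀ a ∈ s, ∀ b ∈ s, |b - a| < δ → f b = f a) {a b : ℝ} (ha : a ∈ s) (hb : b ∈ s) :
    f a = f b := by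
  by_contra hne
  set U : Set ℝ := ⋃ t ∈ {t ∈ s | f t = f a}, Metric.ball t δ with hU
  set V : Set ℝ := ⋃ t ∈ {t ∈ s | f t ≠ f a}, Metric.ball t δ with hV
  have hUopen : IsOpen U := isOpen_biUnion (fun t _ => Metric.isOpen_ball)
  have hVopen : IsOpen V := isOpen_biUnion (fun t _ => Metric.isOpen_ball)
  have hcover : s ⊆ U ∪ V := by
    intro t ht
    rcases eq_or_ne (f t) (f a) with h' | h'
    · exact Or.inl (mem_biUnion ⟨ht, h'⟩ (Metric.mem_ball_self hδ))
    · exact Or.inr (mem_biUnion ⟨ht, h'⟩ (Metric.mem_ball_self hδ))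
  have hUne : (s ∩ U).Nonempty := ⟨a, ha, mem_biUnion ⟨ha, rfl⟩ (Metric.mem_ball_self hδ)⟩
  have hVne : (s ∩ V).Nonempty := ⟨b, hb, mem_biUnion ⟨hb, Ne.symm hne⟩ (Metric.mem_ball_self hδ)⟩
  obtain ⟨z, hzs, hzU, hzV⟩ := hs U V hUopen hVopen hcover hUne hVne
  obtain ⟨t₁, ht₁, hz₁⟩ := mem_iUnion₂.1 hzU
  obtain ⟨t₂, ht₂, hz₂⟩ := mem_iUnion₂.1 hzV
  have e1 : f z = f t₁ := h t₁ ht₁.1 z hzs (by rw [← Real.dist_eq]; exact hz₁)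
  have e2 : f z = f t₂ := h t₂ ht₂.1 z hzs (by rw [← Real.dist_eq]; exact hz₂)
  exact ht₂.2 (by rw [← e2, e1, ht₁.2])
section Winding

lemma winding_key {G : ℝ → ℝ → ℂ}
    (h0 : ∀ s ∈ Icc (0:ℝ) 1, ∀ t ∈ Icc (0:ℝ) 1, G s t ≠ 0)
    (hper : ∀ s ∈ Icc (0:ℝ) 1, G s 0 = G s 1)
    {s s' : ℝ} (hs : s ∈ Icc (0:ℝ) 1) (hs' : s' ∈ Icc (0:ℝ) 1)
    (hclose : ∀ t ∈ Icc (0:ℝ) 1, dist (G s' t) (G s t) < ‖G s t‖)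
    (hGs : ContinuousOn (G s) (Icc 0 1)) (hGs' : ContinuousOn (G s') (Icc 0 1))
    {L L' : ℝ → ℂ}
    (hLc : ContinuousOn L (Icc 0 1)) (hL : ∀ t ∈ Icc (0:ℝ) 1, Complex.exp (L t) = G s t)
    (hL'c : ContinuousOn L' (Icc 0 1)) (hL' : ∀ t ∈ Icc (0:ℝ) 1, Complex.exp (L' t) = G s' t) :
    L' 1 - L' 0 = L 1 - L 0 := by
  have h0' : (0:ℝ) ∈ Icc (0:ℝ) 1 := ⟨le_refl 0, zero_le_one⟩
  have h1' : (1:ℝ) ∈ Icc (0:ℝ) 1 := ⟨zero_le_one, le_refl 1⟩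
  set ρ : ℝ → ℂ := fun t => G s' t / G s t with hρ_def
  have hρ1 : ∀ t ∈ Icc (0:ℝ) 1, ‖ρ t - 1‖ < 1 := fun t ht =>
    norm_div_sub_one_lt (h0 s hs t ht) (hclose t ht)
  have hρ0 : ∀ t ∈ Icc (0:ℝ) 1, ρ t ≠ 0 := fun t ht =>
    div_ne_zero (h0 s' hs' t ht) (h0 s hs t ht)
  have hρc : ContinuousOn ρ (Icc 0 1) := hGs'.div hGs (fun t ht => h0 s hs t ht)
  set d : ℝ → ℂ := fun t => L' t - L t - Complex.log (ρ t) with hd_def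
  have hdc : ContinuousOn d (Icc 0 1) := by
    apply (hL'c.sub hLc).sub
    exact hρc.clog (fun t ht => mem_slitPlane_of_norm_lt (hρ1 t ht))
  have hexp : ∀ t ∈ Icc (0:ℝ) 1, Complex.exp (d t) = 1 := by
    intro t ht
    simp only [hd_def]
    rw [Complex.exp_sub, Complex.exp_sub, hL' t ht, hL t ht, Complex.exp_log (hρ0 t ht)]
    simp only [hρ_def]
    exact div_self (div_ne_zero (h0 s' hs' t ht) (h0 s hs t ht))
  have hd01 : d 0 = d 1 := eq_of_exp_eq_one isPreconnected_Icc hdc hexp h0' h1'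
  have hρper : ρ 0 = ρ 1 := by simp only [hρ_def, hper s hs, hper s' hs']
  simp only [hd_def, hρper] at hd01
  linear_combination -hd01
end Winding

lemma winding_const {G : ℝ → ℝ → ℂ}
    (hG : ContinuousOn (fun q : ℝ × ℝ => G q.1 q.2) (Icc 0 1 ×ˢ Icc 0 1))
    (h0 : ∀ s ∈ Icc (0:ℝ) 1, ∀ t ∈ Icc (0:ℝ) 1, G s t ≠ 0)
    (hper : ∀ s ∈ Icc (0:ℝ) 1, G s 0 = G s 1)
    {L₀ L₁ : ℝ → ℂ}
    (hL₀c : ContinuousOn L₀ (Icc 0 1)) (hL₀ : ∀ t ∈ Icc (0:ℝ) 1, Complex.exp (L₀ t) = G 0 t)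
    (hL₁c : ContinuousOn L₁ (Icc 0 1)) (hL₁ : ∀ t ∈ Icc (0:ℝ) 1, Complex.exp (L₁ t) = G 1 t) :
    L₀ 1 - L₀ 0 = L₁ 1 - L₁ 0 := by
  have h0' : (0:ℝ) ∈ Icc (0:ℝ) 1 := ⟨le_refl 0, zero_le_one⟩
  have h1' : (1:ℝ) ∈ Icc (0:ℝ) 1 := ⟨zero_le_one, le_refl 1⟩
  have hsq : IsCompact (Icc (0:ℝ) 1 ×ˢ Icc (0:ℝ) 1) := isCompact_Icc.prod isCompact_Icc
  -- continuity of sections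
  have hsec : ∀ s ∈ Icc (0:ℝ) 1, ContinuousOn (G s) (Icc 0 1) := by
    intro s hs
    have : ContinuousOn (fun t : ℝ => (s, t)) (Icc 0 1) :=
      (Continuous.prodMk_right s).continuousOn
    exact hG.comp this (fun t ht => Set.mk_mem_prod hs ht)
  -- minimum of norm on the square
  obtain ⟨q₀, hq₀, hminq⟩ := hsq.exists_isMinOn
    (Set.Nonempty.prod (nonempty_Icc.2 zero_le_one) (nonempty_Icc.2 zero_le_one))
    (continuous_norm.comp_continuousOn hG)
  set m : ℝ := ‖G q₀.1 q₀.2‖ with hm_def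
  have hm : 0 < m := norm_pos_iff.2 (h0 q₀.1 hq₀.1 q₀.2 hq₀.2)
  have hmin' : ∀ s ∈ Icc (0:ℝ) 1, ∀ t ∈ Icc (0:ℝ) 1, m ≤ ‖G s t‖ := by
    intro s hs t ht
    exact hminq (Set.mk_mem_prod hs ht)
  -- uniform continuity
  have hu := hsq.uniformContinuousOn_of_continuous hG
  rw [Metric.uniformContinuousOn_iff] at hu
  obtain ⟨δ, hδ, hud⟩ := hu m hm
  -- existence of lifts for every section
  have hex : ∀ s, s ∈ Icc (0:ℝ) 1 → ∃ L : ℝ → ℂ, ContinuousOn L (Icc 0 1) ∧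
      ∀ t ∈ Icc (0:ℝ) 1, Complex.exp (L t) = G s t :=
    fun s hs => exists_lift (hsec s hs) (h0 s hs)
  -- the winding function
  set W : ℝ → ℂ := fun s => if hs : s ∈ Icc (0:ℝ) 1 then
    (hex s hs).choose 1 - (hex s hs).choose 0 else 0 with hW_def
  -- closeness of sections
  have hclose : ∀ s ∈ Icc (0:ℝ) 1, ∀ s' ∈ Icc (0:ℝ) 1, |s' - s| < δ →
      ∀ t ∈ Icc (0:ℝ) 1, dist (G s' t) (G s t) < ‖G s t‖ := by
    intro s hs s' hs' hss' t ht
    have hd : dist ((s', t) : ℝ × ℝ) (s, t) < δ := by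
      rw [Prod.dist_eq]
      simp only [dist_self]
      rw [Real.dist_eq]
      exact max_lt hss' hδ
    calc dist (G s' t) (G s t) < m :=
          hud (s', t) (Set.mk_mem_prod hs' ht) (s, t) (Set.mk_mem_prod hs ht) hd
      _ ≤ ‖G s t‖ := hmin' s hs t ht
  -- W is locally constant
  have hloc : ∀ a ∈ Icc (0:ℝ) 1, ∀ b ∈ Icc (0:ℝ) 1, |b - a| < δ → W b = W a := by
    intro a ha b hb hab
    simp only [hW_def, dif_pos ha, dif_pos hb]
    exact winding_key h0 hper ha hb (hclose a ha b hb hab) (hsec a ha) (hsec b hb)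
      (hex a ha).choose_spec.1 (hex a ha).choose_spec.2
      (hex b hb).choose_spec.1 (hex b hb).choose_spec.2
  have hW01 : W 0 = W 1 := const_of_locally_const isPreconnected_Icc hδ hloc h0' h1'
  -- relate W 0 to L₀ and W 1 to L₁ (well-definedness via winding_key with s = s')
  have hW0 : W 0 = L₀ 1 - L₀ 0 := by
    simp only [hW_def, dif_pos h0']
    exact winding_key h0 hper h0' h0'
      (hclose 0 h0' 0 h0' (by simpa using hδ)) (hsec 0 h0') (hsec 0 h0')
      (hex 0 h0').choose_spec.1 (hex 0 h0').choose_spec.2 hL₀c hL₀ |>.symm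
  have hW1 : W 1 = L₁ 1 - L₁ 0 := by
    simp only [hW_def, dif_pos h1']
    exact winding_key h0 hper h1' h1'
      (hclose 1 h1' 1 h1' (by simpa using hδ)) (hsec 1 h1') (hsec 1 h1')
      (hex 1 h1').choose_spec.1 (hex 1 h1').choose_spec.2 hL₁c hL₁ |>.symm
  rw [← hW0, ← hW1, hW01]
/-- Negation on the unit circle. -/
noncomputable instance : Neg Circle :=
  ⟨fun z => ⟨-(z : ℂ), by simp [Submonoid.unitSphere, mem_sphere_zero_iff_norm, Circle.norm_coe]⟩⟩

/-- Let `φ : D̄ × Circle → ℂ` be continuous and odd in the fiber variable.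
If the boundary loop `t ↦ φ (exp (2πit), -exp (2πit))` avoids `0` and is
null-homotopic in `ℂ \ {0}`, then `φ` vanishes somewhere. -/
theorem exists_zero_of_boundary_loop_nullhomotopic
    (φ : (Metric.closedBall (0 : ℂ) 1) × Circle → ℂ) (hφ : Continuous φ)
    (hodd : ∀ (p : Metric.closedBall (0 : ℂ) 1) (w : Circle), φ (p, -w) = -φ (p, w))
    (x : {z : ℂ // z ≠ 0}) (b : Path x x)
    (hb : ∀ (t : unitInterval) (v : (Metric.closedBall (0 : ℂ) 1) × Circle),
      (v.1 : ℂ) = Complex.exp (2 * π * (t : ℝ) * Complex.I) →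
      (v.2 : ℂ) = -Complex.exp (2 * π * (t : ℝ) * Complex.I) →
      (b t : ℂ) = φ v)
    (hnull : b.Homotopic (Path.refl x)) :
    ∃ (p : Metric.closedBall (0 : ℂ) 1) (w : Circle), φ (p, w) = 0 := by
  by_contra hcon
  push_neg at hcon
  obtain ⟨H⟩ := hnull
  classical
  have h0I : (0:ℝ) ∈ Icc (0:ℝ) 1 := ⟨le_refl 0, zero_le_one⟩
  have h1I : (1:ℝ) ∈ Icc (0:ℝ) 1 := ⟨zero_le_one, le_refl 1⟩
  -- the circle point and its properties
  set cw : ℝ → Circle := fun t => Circle.exp (2 * π * t) with hcw_def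
  have hcw_coe : ∀ t : ℝ, (cw t : ℂ) = Complex.exp (2 * π * (t:ℂ) * Complex.I) := by
    intro t
    rw [hcw_def]
    rw [Circle.coe_exp]
    congr 1
    push_cast
    ring
  have hcwcont : Continuous cw := Circle.exp.continuous.comp (continuous_const.mul continuous_id)
  have hneg_coe : ∀ z : Circle, ((-z : Circle) : ℂ) = -(z : ℂ) := fun z => rfl
  have hnegneg : ∀ z : Circle, -(-z) = z := fun z => Subtype.ext (neg_neg (z:ℂ))
  -- the disk point
  have hmemball : ∀ s t : ℝ,
      (((Set.projIcc (0:ℝ) 1 zero_le_one s : ℝ) : ℂ) * (cw t : ℂ)) ∈ Metric.closedBall (0:ℂ) 1 := by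
    intro s t
    rw [mem_closedBall_zero_iff, norm_mul]
    have h1 : ‖(cw t : ℂ)‖ = 1 := by rw [Circle.norm_coe]
    have h2 : ‖(((Set.projIcc (0:ℝ) 1 zero_le_one s : ℝ)) : ℂ)‖ ≤ 1 := by
      rw [Complex.norm_real, Real.norm_eq_abs]
      have := (Set.projIcc (0:ℝ) 1 zero_le_one s).2
      rw [abs_le]
      constructor <;> [linarith [this.1]; exact this.2]
    rw [h1, mul_one]
    exact h2
  set pt : ℝ → ℝ → (Metric.closedBall (0:ℂ) 1) := fun s t => ⟨_, hmemball s t⟩ with hpt_def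
  set K : ℝ → ℝ → ℂ := fun s t => φ (pt s t, -cw t) with hK_def
  -- continuity of K
  have hKcont : Continuous (fun q : ℝ × ℝ => K q.1 q.2) := by
    apply hφ.comp
    apply Continuous.prodMk
    · apply Continuous.subtype_mk
      exact (Complex.continuous_ofReal.comp (continuous_subtype_val.comp
        (continuous_projIcc.comp continuous_fst))).mul
        (continuous_subtype_val.comp (hcwcont.comp continuous_snd))
    · exact Continuous.subtype_mk
        ((continuous_subtype_val.comp (hcwcont.comp continuous_snd)).neg) _
  -- periodicity of K
  have hcw01 : cw 0 = cw 1 := by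
    apply Subtype.ext
    rw [hcw_coe, hcw_coe]
    have e0 : (2 * (π:ℂ) * ((0:ℝ):ℂ) * Complex.I) = 0 := by push_cast; ring
    have e1 : (2 * (π:ℂ) * ((1:ℝ):ℂ) * Complex.I) = 2 * π * Complex.I := by push_cast; ring
    rw [e0, e1, Complex.exp_zero, Complex.exp_two_pi_mul_I]
  have hpt01 : ∀ s, pt s 0 = pt s 1 := by
    intro s
    apply Subtype.ext
    simp only [hpt_def]
    rw [hcw01]
  have hKper : ∀ s, K s 0 = K s 1 := by
    intro s
    simp only [hK_def]
    rw [hcw01, hpt01]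
  -- K 1 is the boundary loop b
  have hK1 : ∀ t (ht : t ∈ Icc (0:ℝ) 1), K 1 t = (b ⟨t, ht⟩ : ℂ) := by
    intro t ht
    refine (hb ⟨t, ht⟩ (pt 1 t, -cw t) ?_ ?_).symm
    · show ((Set.projIcc (0:ℝ) 1 zero_le_one 1 : ℝ) : ℂ) * (cw t : ℂ) = _
      rw [Set.projIcc_right]
      push_cast
      rw [one_mul, hcw_coe]
    · show ((-cw t : Circle) : ℂ) = _
      rw [hneg_coe, hcw_coe]
  -- oddness of K 0
  have hpt0 : ∀ t t' : ℝ, pt 0 t = pt 0 t' := by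
    intro t t'
    apply Subtype.ext
    simp only [hpt_def]
    rw [Set.projIcc_left]
    push_cast
    rw [zero_mul, zero_mul]
  have hcwhalf : ∀ t : ℝ, cw (t + 1/2) = -cw t := by
    intro t
    apply Subtype.ext
    rw [hcw_coe, hneg_coe, hcw_coe]
    have harg : 2 * π * ((t:ℝ)+1/2 : ℝ) * Complex.I = 2 * π * (t:ℂ) * Complex.I + π * Complex.I := by
      push_cast
      ring
    rw [harg, Complex.exp_add, Complex.exp_pi_mul_I]
    ring
  have hKodd : ∀ t : ℝ, K 0 (t + 1/2) = -K 0 t := by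
    intro t
    simp only [hK_def]
    rw [hcwhalf t, hnegneg, hpt0 (t+1/2) t]
    have := hodd (pt 0 t) (cw t)
    linear_combination this
  -- lifts of K 0 and K 1
  obtain ⟨L₀, hL₀c, hL₀⟩ := exists_lift
    ((hKcont.comp (Continuous.prodMk_right 0)).continuousOn) (fun t _ => hcon _ _)
  obtain ⟨L₁, hL₁c, hL₁⟩ := exists_lift
    ((hKcont.comp (Continuous.prodMk_right 1)).continuousOn) (fun t _ => hcon _ _)
  simp only [Function.comp] at hL₀ hL₁
  have eq1 : L₀ 1 - L₀ 0 = L₁ 1 - L₁ 0 :=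
    winding_const hKcont.continuousOn (fun s _ t _ => hcon _ _) (fun s _ => hKper s)
      hL₀c hL₀ hL₁c hL₁
  -- the null-homotopy
  set GB : ℝ → ℝ → ℂ := fun s t =>
    ((H (Set.projIcc (0:ℝ) 1 zero_le_one s, Set.projIcc (0:ℝ) 1 zero_le_one t) :
      {z : ℂ // z ≠ 0}) : ℂ) with hGB_def
  have hGBcont : Continuous (fun q : ℝ × ℝ => GB q.1 q.2) :=
    continuous_subtype_val.comp (H.continuous.comp
      ((continuous_projIcc.comp continuous_fst).prodMk (continuous_projIcc.comp continuous_snd)))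
  have hproj0 : Set.projIcc (0:ℝ) 1 zero_le_one 0 = 0 := by
    apply Subtype.ext
    simp [Set.coe_projIcc]
  have hproj1 : Set.projIcc (0:ℝ) 1 zero_le_one 1 = 1 := by
    apply Subtype.ext
    simp [Set.coe_projIcc]
  have hGB0 : ∀ t (ht : t ∈ Icc (0:ℝ) 1), GB 0 t = (b ⟨t, ht⟩ : ℂ) := by
    intro t ht
    simp only [hGB_def]
    rw [hproj0, Set.projIcc_of_mem zero_le_one ht]
    congr 1
    exact H.apply_zero ⟨t, ht⟩
  have hGB1 : ∀ t ∈ Icc (0:ℝ) 1, GB 1 t = (x : ℂ) := by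
    intro t ht
    simp only [hGB_def]
    rw [hproj1]
    congr 1
    exact H.apply_one _
  have hGBper : ∀ s ∈ Icc (0:ℝ) 1, GB s 0 = GB s 1 := by
    intro s _
    simp only [hGB_def]
    rw [hproj0, hproj1]
    have e0 : H (Set.projIcc (0:ℝ) 1 zero_le_one s, 0) = b 0 :=
      H.eq_fst _ (by left; rfl)
    have e1 : H (Set.projIcc (0:ℝ) 1 zero_le_one s, 1) = b 1 :=
      H.eq_fst _ (by right; rfl)
    rw [e0, e1, b.source, b.target]
  have hGBne : ∀ s ∈ Icc (0:ℝ) 1, ∀ t ∈ Icc (0:ℝ) 1, GB s t ≠ 0 := by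
    intro s _ t _
    exact (H (Set.projIcc (0:ℝ) 1 zero_le_one s, Set.projIcc (0:ℝ) 1 zero_le_one t)).2
  -- L₁ lifts GB 0
  have hL₁' : ∀ t ∈ Icc (0:ℝ) 1, Complex.exp (L₁ t) = GB 0 t := by
    intro t ht
    rw [hGB0 t ht, ← hK1 t ht]
    exact hL₁ t ht
  -- the constant lift of GB 1
  have eq2 : L₁ 1 - L₁ 0 = 0 := by
    have := winding_const hGBcont.continuousOn hGBne hGBper
      hL₁c hL₁' (continuousOn_const : ContinuousOn (fun _ : ℝ => Complex.log x) _)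
      (fun t ht => by rw [Complex.exp_log x.2, hGB1 t ht])
    rw [this]
    ring
  have hzero : L₀ 1 - L₀ 0 = 0 := by rw [eq1, eq2]
  -- the oddness contradiction
  set d : ℝ → ℂ := fun t => L₀ (t + 1/2) - L₀ t - π * Complex.I with hd_def
  have hmem2 : ∀ t ∈ Icc (0:ℝ) (1/2), t + 1/2 ∈ Icc (0:ℝ) 1 := by
    intro t ht
    constructor <;> [linarith [ht.1]; linarith [ht.2]]
  have hmem1 : ∀ t ∈ Icc (0:ℝ) (1/2), t ∈ Icc (0:ℝ) 1 := by
    intro t ht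
    constructor <;> [exact ht.1; linarith [ht.2]]
  have hdc : ContinuousOn d (Icc 0 (1/2)) := by
    apply ContinuousOn.sub ?_ continuousOn_const
    apply ContinuousOn.sub ?_ (hL₀c.mono (Icc_subset_Icc le_rfl (by norm_num)))
    exact hL₀c.comp ((continuous_id.add continuous_const).continuousOn) hmem2
  have hdexp : ∀ t ∈ Icc (0:ℝ) (1/2), Complex.exp (d t) = 1 := by
    intro t ht
    simp only [hd_def]
    rw [Complex.exp_sub, Complex.exp_sub, hL₀ _ (hmem2 t ht), hL₀ _ (hmem1 t ht),
      Complex.exp_pi_mul_I, hKodd t]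
    have hne : K 0 t ≠ 0 := hcon _ _
    rw [neg_div, div_self hne]
    norm_num
  have hd01 : d 0 = d (1/2) := eq_of_exp_eq_one isPreconnected_Icc hdc hdexp
    ⟨le_refl 0, by norm_num⟩ ⟨by norm_num, le_refl (1/2 : ℝ)⟩
  have hd0exp : Complex.exp (d 0) = 1 := hdexp 0 ⟨le_refl 0, by norm_num⟩
  have hd0val : d 0 = -(π * Complex.I) := by
    have h1 : ((0:ℝ) + 1/2) = (1/2 : ℝ) := by norm_num
    have h2 : ((1:ℝ)/2 + 1/2) = (1:ℝ) := by norm_num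
    simp only [hd_def, h1, h2] at hd01 ⊢
    linear_combination (hd01 + hzero) / 2
  rw [hd0val, Complex.exp_neg, Complex.exp_pi_mul_I] at hd0exp
  norm_num at hd0exp
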